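/- Let x : ℕ → ℚ be a sequence with x(0) = 0 and let X(t) = Σ_{n≥1} x(n) tⁿ be its generating formal power series over ℚ. Then for every m ≥ 1, the generating function of the m-th invert transform of x satisfies Σ_{n≥1} (𝒴^m x)(n) tⁿ = X(t) · (1 − m·X(t))⁻¹; equivalently, 𝒴^m(x) = (1/m)·𝒴(m·x). -/

import Mathlib

/-- The invert transform of a sequence `x : ℕ → ℚ` (indexed from 1, `x 0` ignored):
`(𝒴x)(0) = 0` and `(𝒴x)(n) = x n + ∑_{j=1}^{n-1} x j * (𝒴x)(n-j)` for `n ≥ 1`. -/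
def invert (x : ℕ → ℚ) : ℕ → ℚ
  | 0 => 0
  | n + 1 => x (n + 1) + ∑ j ∈ Finset.range n, x (j + 1) * invert x (n - j)
  termination_by n => n
  decreasing_by omega

/-- The partial Bell polynomial `B_{n,k}(z₁, z₂, …)`, evaluated at a sequence of rationals
`z` (indexed from 1, `z 0` ignored): the sum over all finitely supported `α : ℕ → ℕ` with
`α 0 = 0`, `∑ i, α i = k` and `∑ i, i * α i = n` of `(n! / ∏ i, (α i)!) * ∏ i (z i / i!)^(α i)`. -/
def partialBell (n k : ℕ) (z : ℕ → ℚ) : ℚ :=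
  ∑ α ∈ ((Finset.range (n + 1)).finsuppAntidiag k).filter
      (fun α => (∑ i ∈ Finset.range (n + 1), i * α i) = n ∧ α 0 = 0),
    ((n.factorial : ℚ) / ∏ i ∈ Finset.range (n + 1), ((α i).factorial : ℚ)) *
      ∏ i ∈ Finset.range (n + 1), (z i / (i.factorial : ℚ)) ^ α i

lemma invert_zero (x : ℕ → ℚ) : invert x 0 = 0 := by simp [invert]

lemma invert_key (x : ℕ → ℚ) (hx : x 0 = 0) :
    PowerSeries.mk (invert x) * (1 - PowerSeries.mk x) = PowerSeries.mk x := by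
  ext n
  rw [mul_sub, mul_one, map_sub]
  cases n with
  | zero =>
      simp [invert_zero, hx, PowerSeries.coeff_mul]
  | succ n =>
      rw [mul_comm, PowerSeries.coeff_mul, Finset.Nat.sum_antidiagonal_eq_sum_range_succ_mk]
      simp only [PowerSeries.coeff_mk]
      rw [Finset.sum_range_succ', Finset.sum_range_succ]
      simp only [Nat.succ_sub_succ, hx, zero_mul, add_zero, Nat.sub_self, invert_zero,
        mul_zero]
      rw [invert]
      ring

lemma iterate_zero_coeff (x : ℕ → ℚ) (hx : x 0 = 0) (m : ℕ) : invert^[m] x 0 = 0 := by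
  induction m with
  | zero => simpa
  | succ m ih => rw [Function.iterate_succ_apply']; exact invert_zero _

lemma invert_iter_key (x : ℕ → ℚ) (hx : x 0 = 0) (m : ℕ) :
    PowerSeries.mk (invert^[m] x) * (1 - PowerSeries.C (m : ℚ) * PowerSeries.mk x)
      = PowerSeries.mk x := by
  induction m with
  | zero => simp
  | succ m ih =>
      rw [Function.iterate_succ_apply']
      have hZ := invert_key (invert^[m] x) (iterate_zero_coeff x hx m)
      rw [Nat.cast_add, Nat.cast_one, map_add, map_one]
      linear_combination (1 - PowerSeries.C (m : ℚ) * PowerSeries.mk x) * hZ + ih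
        + (PowerSeries.mk (invert (invert^[m] x))) * ih

/-- For `x : ℕ → ℚ` with `x 0 = 0` and every `m ≥ 1`, the generating function of the
`m`-th invert transform of `x` is `X(t) * (1 - m·X(t))⁻¹`; equivalently,
`𝒴^m(x) = (1/m)·𝒴(m·x)`. -/
theorem stmt_1 (x : ℕ → ℚ) (hx : x 0 = 0) (m : ℕ) (hm : 1 ≤ m) :
    PowerSeries.mk (invert^[m] x)
        = PowerSeries.mk x * (1 - PowerSeries.C (m : ℚ) * PowerSeries.mk x)⁻¹
      ∧ ∀ n, (invert^[m] x) n = (1 / (m : ℚ)) * invert (fun j => (m : ℚ) * x j) n := by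
  set u : PowerSeries ℚ := 1 - PowerSeries.C (m : ℚ) * PowerSeries.mk x with hu_def
  have hu : PowerSeries.constantCoeff u ≠ 0 := by
    simp [hu_def, hx]
  have key := invert_iter_key x hx m
  constructor
  · have : PowerSeries.mk (invert^[m] x) * (u * u⁻¹) = PowerSeries.mk x * u⁻¹ := by
      rw [← mul_assoc, key]
    rwa [PowerSeries.mul_inv_cancel _ hu, mul_one] at this
  · have hw0 : (fun j => (m : ℚ) * x j) 0 = 0 := by simp [hx]
    have hw := invert_key (fun j => (m : ℚ) * x j) hw0
    have hmk : PowerSeries.mk (fun j => (m : ℚ) * x j)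
        = PowerSeries.C (m : ℚ) * PowerSeries.mk x := by
      ext n; rw [PowerSeries.coeff_C_mul]; simp
    rw [hmk] at hw
    have hcancel : PowerSeries.mk (invert (fun j => (m : ℚ) * x j))
        = PowerSeries.C (m : ℚ) * PowerSeries.mk (invert^[m] x) := by
      have hu_ne : u ≠ 0 := fun h => hu (by simp [h])
      apply mul_right_cancel₀ hu_ne
      rw [hw, mul_assoc, key]
    intro n
    have := congrArg (PowerSeries.coeff n) hcancel
    simp only [PowerSeries.coeff_mk, PowerSeries.coeff_C_mul] at this
    have hm' : (m : ℚ) ≠ 0 := by positivity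
    field_simp [this]
    rw [this]; ring
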